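/- Let (S,R) be an argumentation network whose attack relation R is acyclic (there is no nonempty directed cycle under R), and let f : S → [0,1]. Define the sequence of assignments α_0 = f and α_{i+1}(X) = (1/2)·α_i(X) + (1/2)·min(f(X), 1 − max_{Y ∈ Att(X)} α_i(Y)), with the convention that the maximum over the empty set is 0. Define β : S → [0,1] by recursion on the (well-founded, since R is acyclic and S is finite) attack relation: β(X) = f(X) if Att(X) = ∅, and β(X) = min(f(X), 1 − max_{Y ∈ Att(X)} β(Y)) otherwise. Then for every X ∈ S, α_i(X) → β(X) as i → ∞. -/

import Mathlib

open Filter Topology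

variable {S : Type*}

/-- Maximum of `V` over the attackers of `X` (i.e. `{Y | R Y X}`),
with the convention that the maximum over the empty set is `0`. -/
noncomputable def attMax [Fintype S] (R : S → S → Prop) [DecidableRel R] (V : S → ℝ) (X : S) : ℝ :=
  (Finset.univ.filter (fun Y => R Y X)).fold max 0 V

/-- One step of the Gabbay-Rodrigues iteration. -/
noncomputable def grStep [Fintype S] (R : S → S → Prop) [DecidableRel R] (V : S → ℝ) (X : S) : ℝ :=
  (1 - V X) * min (1/2) (1 - attMax R V X) + V X * max (1/2) (1 - attMax R V X)

/-- The Gabbay-Rodrigues iteration sequence from the initial assignment `V0`. -/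
noncomputable def grSeq [Fintype S] (R : S → S → Prop) [DecidableRel R] (V0 : S → ℝ) : ℕ → S → ℝ
  | 0 => V0
  | i + 1 => grStep R (grSeq R V0 i)

def inSet (V : S → ℝ) : Set S := {X | V X = 1}

def outSet (V : S → ℝ) : Set S := {X | V X = 0}

def conflictFree (R : S → S → Prop) (E : Set S) : Prop := ∀ X ∈ E, ∀ Y ∈ E, ¬ R X Y

def acceptable (R : S → S → Prop) (E : Set S) (X : S) : Prop := ∀ Y, R Y X → ∃ Z ∈ E, R Z Y

def admissible (R : S → S → Prop) (E : Set S) : Prop :=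
  conflictFree R E ∧ ∀ X ∈ E, acceptable R E X

def completeExt (R : S → S → Prop) (E : Set S) : Prop :=
  admissible R E ∧ ∀ X, acceptable R E X → X ∈ E

/-- `E⁺` : the set of arguments attacked by `E`. -/
def plusSet (R : S → S → Prop) (E : Set S) : Set S := {X | ∃ Y ∈ E, R Y X}

/-- The GR sequence is stable at iteration `k` if every node with a crisp value at
iteration `k` keeps that value at iteration `k+1`. -/
def grStable [Fintype S] (R : S → S → Prop) [DecidableRel R] (V0 : S → ℝ) (k : ℕ) : Prop :=
  ∀ X : S, (grSeq R V0 k X = 0 ∨ grSeq R V0 k X = 1) → grSeq R V0 (k + 1) X = grSeq R V0 k X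

/-- The iteration sequence of Pereira et al. : `α₀ = f` and
`α_{i+1}(X) = (1/2)·α_i(X) + (1/2)·min(f(X), 1 − max_{Y ∈ Att(X)} α_i(Y))`. -/
noncomputable def alphaSeq [Fintype S] (R : S → S → Prop) [DecidableRel R]
    (f : S → ℝ) : ℕ → S → ℝ
  | 0 => f
  | i + 1 => fun X =>
      (1/2) * alphaSeq R f i X + (1/2) * min (f X) (1 - attMax R (alphaSeq R f i) X)

lemma contract_aux (a g : ℕ → ℝ) (c : ℝ)
    (ha : ∀ i, a (i+1) = (1/2) * a i + (1/2) * g i)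
    (hg : Tendsto g atTop (nhds c)) : Tendsto a atTop (nhds c) := by
  rw [Metric.tendsto_atTop] at hg ⊢
  intro ε hε
  obtain ⟨N, hN⟩ := hg (ε/2) (by linarith)
  have key : ∀ k, |a (N+k) - c| ≤ (1/2)^k * |a N - c| + ε/2 := by
    intro k
    induction k with
    | zero => simp; linarith
    | succ k ih =>
      have hgN : |g (N+k) - c| ≤ ε/2 := by
        have := hN (N+k) (Nat.le_add_right _ _)
        rw [Real.dist_eq] at this; linarith
      have heq : a (N+(k+1)) - c = (1/2)*(a (N+k) - c) + (1/2)*(g (N+k) - c) := by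
        have : N+(k+1) = (N+k)+1 := by ring
        rw [this, ha]; ring
      calc |a (N+(k+1)) - c| = |(1/2)*(a (N+k) - c) + (1/2)*(g (N+k) - c)| := by rw [heq]
        _ ≤ |(1/2)*(a (N+k) - c)| + |(1/2)*(g (N+k) - c)| := abs_add_le _ _
        _ = (1/2)*|a (N+k) - c| + (1/2)*|g (N+k) - c| := by
            rw [abs_mul, abs_mul, abs_of_pos (by norm_num : (0:ℝ) < 1/2)]
        _ ≤ (1/2)*((1/2)^k*|a N - c| + ε/2) + (1/2)*(ε/2) := by gcongr
        _ = (1/2)^(k+1)*|a N - c| + ε/2 := by ring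
  have h2 : Tendsto (fun k => (1/2:ℝ)^k * |a N - c|) atTop (nhds 0) := by
    simpa using
      (tendsto_pow_atTop_nhds_zero_of_lt_one (by norm_num : (0:ℝ) ≤ 1/2)
        (by norm_num)).mul_const |a N - c|
  rw [Metric.tendsto_atTop] at h2
  obtain ⟨K, hK⟩ := h2 (ε/2) (by linarith)
  refine ⟨N + K, fun n hn => ?_⟩
  have hk : K ≤ n - N := by omega
  have hn' : n = N + (n - N) := by omega
  have h3 := hK (n - N) hk
  rw [Real.dist_eq, sub_zero] at h3
  have h4 : (1/2:ℝ)^(n-N) * |a N - c| < ε/2 := lt_of_abs_lt h3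
  have h5 := key (n - N)
  rw [Real.dist_eq, hn']
  linarith

lemma tendsto_fold_max (t : Finset S) (V : ℕ → S → ℝ) (W : S → ℝ)
    (h : ∀ Y ∈ t, Tendsto (fun i => V i Y) atTop (nhds (W Y))) :
    Tendsto (fun i => t.fold max 0 (V i)) atTop (nhds (t.fold max 0 W)) := by
  classical
  induction t using Finset.induction_on with
  | empty => simpa using tendsto_const_nhds
  | insert _ _ ha ih =>
      rw [Finset.fold_insert ha]
      simp only [Finset.fold_insert ha]
      exact (h _ (Finset.mem_insert_self _ _)).max
        (ih (fun Y hY => h Y (Finset.mem_insert_of_mem hY)))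

theorem stmt19 [Fintype S] [Nonempty S] (R : S → S → Prop) [DecidableRel R]
    (hacyc : ∀ X : S, ¬ Relation.TransGen R X X)
    (f : S → ℝ) (hf : ∀ X, f X ∈ Set.Icc (0:ℝ) 1)
    (β : S → ℝ) (hβr : ∀ X, β X ∈ Set.Icc (0:ℝ) 1)
    (hβ0 : ∀ X : S, (∀ Y, ¬ R Y X) → β X = f X)
    (hβ1 : ∀ X : S, (∃ Y, R Y X) → β X = min (f X) (1 - attMax R β X)) :
    ∀ X : S, Tendsto (fun i => alphaSeq R f i X) atTop (nhds (β X)) := by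
  have hwf : WellFounded R := by
    have ht : IsTrans S (Relation.TransGen R) := ⟨fun _ _ _ => Relation.TransGen.trans⟩
    have hi : IsIrrefl S (Relation.TransGen R) := ⟨hacyc⟩
    exact Subrelation.wf (fun h => Relation.TransGen.single h)
      (Finite.wellFounded_of_trans_of_irrefl _)
  intro X
  induction X using WellFounded.induction hwf with
  | _ X ih =>
    have hatt : Tendsto (fun i => attMax R (alphaSeq R f i) X) atTop (nhds (attMax R β X)) := by
      apply tendsto_fold_max
      intro Y hY
      exact ih Y (Finset.mem_filter.mp hY).2
    have hmin : Tendsto (fun i => min (f X) (1 - attMax R (alphaSeq R f i) X)) atTop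
        (nhds (min (f X) (1 - attMax R β X))) :=
      tendsto_const_nhds.min (tendsto_const_nhds.sub hatt)
    have hc : min (f X) (1 - attMax R β X) = β X := by
      by_cases h : ∃ Y, R Y X
      · exact (hβ1 X h).symm
      · push_neg at h
        have he : (Finset.univ.filter (fun Y => R Y X)) = ∅ := by
          rw [Finset.filter_eq_empty_iff]
          exact fun {Y} _ => h Y
        rw [attMax, he]
        simp [hβ0 X h, min_eq_left (hf X).2]
    rw [← hc]
    exact contract_aux _ _ _ (fun i => rfl) hmin
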